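/- Let G be a finite simple undirected graph with n vertices and with no isolated vertices, let 1 ≤ p ≤ n, and let (A_i)_{i=0}^{p} be a greedy sequence for dom (with k = 1). Then ext(A_p) ≥ ((e − 1)/(e + 1)) · ext(B) for every B ⊆ V with |B| = p; that is, the greedy algorithm is an (e − 1)/(e + 1)-approximation for Max Ext-Domination. -/
import Mathlib

open Finset
open scoped Classical

noncomputable def kNbhd {V : Type*} [Fintype V] (G : SimpleGraph V) (k : ℕ) (v : V) :
    Finset V :=
  Finset.univ.filter (fun u => G.Reachable u v ∧ G.dist u v ≤ k)

noncomputable def domk {V : Type*} [Fintype V] (G : SimpleGraph V) (k : ℕ) (A : Finset V) :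
    ℕ :=
  (A.biUnion (kNbhd G k)).card

noncomputable def extk {V : Type*} [Fintype V] (G : SimpleGraph V) (k : ℕ) (A : Finset V) :
    ℤ :=
  (domk G k A : ℤ) - (A.card : ℤ)

def IsGreedySeq {V : Type*} [Fintype V] (G : SimpleGraph V) (k : ℕ) (N : ℕ)
    (A : ℕ → Finset V) : Prop :=
  A 0 = ∅ ∧ ∀ i < N, ∃ v ∉ A i, A (i + 1) = insert v (A i) ∧
    ∀ u ∉ A i, domk G k (insert u (A i)) ≤ domk G k (insert v (A i))

section AuxLemmas

variable {V : Type*} [Fintype V] (G : SimpleGraph V) (k : ℕ)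

lemma mem_kNbhd_self (v : V) : v ∈ kNbhd G k v := by
  simp only [kNbhd, Finset.mem_filter, Finset.mem_univ, true_and]
  exact ⟨SimpleGraph.Reachable.refl v, by simp [SimpleGraph.dist_self]⟩

lemma subset_biUnion_kNbhd (A : Finset V) : A ⊆ A.biUnion (kNbhd G k) :=
  fun a ha => Finset.mem_biUnion.2 ⟨a, ha, mem_kNbhd_self G k a⟩

lemma domk_mono {A B : Finset V} (h : A ⊆ B) : domk G k A ≤ domk G k B :=
  Finset.card_le_card (Finset.biUnion_subset_biUnion_of_subset_left _ h)

lemma domk_insert (v : V) (A : Finset V) :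
    domk G k (insert v A) = (kNbhd G k v \ A.biUnion (kNbhd G k)).card + domk G k A := by
  unfold domk
  rw [Finset.biUnion_insert, ← Finset.card_sdiff_add_card]

lemma card_le_domk (A : Finset V) : A.card ≤ domk G k A :=
  Finset.card_le_card (subset_biUnion_kNbhd G k A)

lemma domk_le_cover (A B : Finset V) :
    domk G k B ≤ domk G k A + ∑ b ∈ B, (kNbhd G k b \ A.biUnion (kNbhd G k)).card := by
  have hsub : B.biUnion (kNbhd G k) ⊆
      A.biUnion (kNbhd G k) ∪ B.biUnion (fun b => kNbhd G k b \ A.biUnion (kNbhd G k)) := by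
    intro x hx
    obtain ⟨b, hb, hxb⟩ := Finset.mem_biUnion.1 hx
    by_cases hxA : x ∈ A.biUnion (kNbhd G k)
    · exact Finset.mem_union_left _ hxA
    · exact Finset.mem_union_right _
        (Finset.mem_biUnion.2 ⟨b, hb, Finset.mem_sdiff.2 ⟨hxb, hxA⟩⟩)
  calc domk G k B ≤ (A.biUnion (kNbhd G k)
        ∪ B.biUnion (fun b => kNbhd G k b \ A.biUnion (kNbhd G k))).card :=
        Finset.card_le_card hsub
    _ ≤ (A.biUnion (kNbhd G k)).card
        + (B.biUnion (fun b => kNbhd G k b \ A.biUnion (kNbhd G k))).card :=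
        Finset.card_union_le _ _
    _ ≤ domk G k A + ∑ b ∈ B, (kNbhd G k b \ A.biUnion (kNbhd G k)).card :=
        Nat.add_le_add le_rfl Finset.card_biUnion_le

end AuxLemmas

/-- on graphs without isolated vertices, the greedy algorithm is an
`(e-1)/(e+1)`-approximation for Max Ext-Domination. -/
theorem greedy_max_ext_domination {V : Type*} [Fintype V] (G : SimpleGraph V)
    (hiso : ∀ v : V, ∃ u : V, G.Adj v u)
    (p : ℕ) (hp1 : 1 ≤ p) (hpn : p ≤ Fintype.card V)
    (A : ℕ → Finset V) (hA : IsGreedySeq G 1 p A) :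
    ∀ B : Finset V, B.card = p →
      (Real.exp 1 - 1) / (Real.exp 1 + 1) * (extk G 1 B : ℝ) ≤ (extk G 1 (A p) : ℝ) := by
  intro B hB
  obtain ⟨h0, hgr⟩ := hA
  -- basic facts about e
  set E := Real.exp 1 with hEdef
  have hE2 : (2:ℝ) < E := by
    have := Real.exp_one_gt_d9; rw [hEdef]; norm_num at this ⊢; linarith
  have hE3 : E < 3 := by
    have := Real.exp_one_lt_d9; rw [hEdef]; norm_num at this ⊢; linarith
  have hEpos : (0:ℝ) < E := by linarith
  have hE1pos : (0:ℝ) < E + 1 := by linarith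
  -- chain facts
  have hsub : ∀ i < p, A i ⊆ A (i + 1) := by
    intro i hi
    obtain ⟨v, _, he, _⟩ := hgr i hi
    rw [he]; exact Finset.subset_insert _ _
  have hchain : ∀ j, j ≤ p → ∀ i, i ≤ j → A i ⊆ A j := by
    intro j
    induction j with
    | zero => intro _ i hi; rw [Nat.le_zero.mp hi]
    | succ j ih =>
      intro hjp i hi
      rcases Nat.eq_or_lt_of_le hi with rfl | h
      · exact subset_rfl
      · exact (ih (Nat.le_of_succ_le hjp) i (Nat.lt_succ_iff.mp h)).trans
          (hsub j hjp)
  have hcard : ∀ i ≤ p, (A i).card = i := by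
    intro i
    induction i with
    | zero => intro _; rw [h0]; simp
    | succ i ih =>
      intro hip
      obtain ⟨v, hv, he, _⟩ := hgr i hip
      rw [he, Finset.card_insert_of_notMem hv, ih (Nat.le_of_succ_le hip)]
  have hd0 : domk G 1 (A 0) = 0 := by rw [h0]; simp [domk]
  -- per-step bound for the greedy recursion
  have hBbound : ∀ i < p, domk G 1 B + p * domk G 1 (A i)
      ≤ domk G 1 (A i) + p * domk G 1 (A (i + 1)) := by
    intro i hi
    obtain ⟨v, hv, he, hmax⟩ := hgr i hi
    have hterm : ∀ b ∈ B, (kNbhd G 1 b \ (A i).biUnion (kNbhd G 1)).card + domk G 1 (A i)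
        ≤ domk G 1 (A (i + 1)) := by
      intro b _
      by_cases hbA : b ∈ A i
      · have hsubN : kNbhd G 1 b ⊆ (A i).biUnion (kNbhd G 1) :=
          fun x hx => Finset.mem_biUnion.2 ⟨b, hbA, hx⟩
        rw [Finset.sdiff_eq_empty_iff_subset.2 hsubN]
        simpa using domk_mono G 1 (hsub i hi)
      · rw [← domk_insert, he]
        exact hmax b hbA
    have hsum : ∑ b ∈ B, ((kNbhd G 1 b \ (A i).biUnion (kNbhd G 1)).card
        + domk G 1 (A i)) ≤ ∑ _b ∈ B, domk G 1 (A (i + 1)) :=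
      Finset.sum_le_sum hterm
    rw [Finset.sum_add_distrib, Finset.sum_const, Finset.sum_const, smul_eq_mul,
      smul_eq_mul, hB] at hsum
    have hcover := domk_le_cover G 1 (A i) B
    calc domk G 1 B + p * domk G 1 (A i)
        ≤ (domk G 1 (A i) + ∑ b ∈ B, (kNbhd G 1 b \ (A i).biUnion (kNbhd G 1)).card)
          + p * domk G 1 (A i) := Nat.add_le_add_right hcover _
      _ = domk G 1 (A i) + (∑ b ∈ B, (kNbhd G 1 b \ (A i).biUnion (kNbhd G 1)).card
          + p * domk G 1 (A i)) := by ring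
      _ ≤ domk G 1 (A i) + p * domk G 1 (A (i + 1)) := Nat.add_le_add_left hsum _
  have hp0 : (0:ℝ) < (p:ℝ) := by exact_mod_cast hp1
  have h1p : (0:ℝ) ≤ 1 - 1 / (p:ℝ) := by
    rw [sub_nonneg]
    apply div_le_one_of_le₀
    · exact_mod_cast hp1
    · linarith
  -- the real-valued greedy recursion
  have hrec : ∀ i ≤ p, (domk G 1 B : ℝ) - (domk G 1 (A i) : ℝ)
      ≤ (1 - 1 / (p:ℝ)) ^ i * (domk G 1 B : ℝ) := by
    intro i
    induction i with
    | zero => intro _; rw [hd0]; simp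
    | succ i ih =>
      intro hip
      have hi : i < p := hip
      have ih' := ih (le_of_lt hi)
      have hb' : (domk G 1 B : ℝ) + (p:ℝ) * (domk G 1 (A i) : ℝ)
          ≤ (domk G 1 (A i) : ℝ) + (p:ℝ) * (domk G 1 (A (i + 1)) : ℝ) := by
        exact_mod_cast hBbound i hi
      have hmul : (p:ℝ) * ((domk G 1 B : ℝ) - (domk G 1 (A (i + 1)) : ℝ))
          ≤ (p:ℝ) * ((1 - 1 / (p:ℝ)) * ((domk G 1 B : ℝ) - (domk G 1 (A i) : ℝ))) := by
        have hps : (p:ℝ) * (1 - 1 / (p:ℝ)) = (p:ℝ) - 1 := by field_simp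
        rw [← mul_assoc, hps]
        nlinarith [hb']
      have key := le_of_mul_le_mul_left hmul hp0
      calc (domk G 1 B : ℝ) - (domk G 1 (A (i + 1)) : ℝ)
          ≤ (1 - 1 / (p:ℝ)) * ((domk G 1 B : ℝ) - (domk G 1 (A i) : ℝ)) := key
        _ ≤ (1 - 1 / (p:ℝ)) * ((1 - 1 / (p:ℝ)) ^ i * (domk G 1 B : ℝ)) :=
            mul_le_mul_of_nonneg_left ih' h1p
        _ = (1 - 1 / (p:ℝ)) ^ (i + 1) * (domk G 1 B : ℝ) := by ring
  -- rewrite the goal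
  have hEA : ((extk G 1 (A p) : ℤ) : ℝ) = (domk G 1 (A p) : ℝ) - (p:ℝ) := by
    unfold extk; rw [hcard p le_rfl]; push_cast; ring
  have hEB : ((extk G 1 B : ℤ) : ℝ) = (domk G 1 B : ℝ) - (p:ℝ) := by
    unfold extk; rw [hB]; push_cast; ring
  rw [hEA, hEB, div_mul_eq_mul_div, div_le_iff₀ hE1pos]
  have hpB : (p:ℝ) ≤ (domk G 1 B : ℝ) := by
    rw [← hB]; exact_mod_cast card_le_domk G 1 B
  -- case: full coverage
  by_cases hfull : (A p).biUnion (kNbhd G 1) = Finset.univ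
  · have hdp : domk G 1 (A p) = Fintype.card V := by
      unfold domk; rw [hfull, Finset.card_univ]
    have hyx : (domk G 1 B : ℝ) ≤ (domk G 1 (A p) : ℝ) := by
      rw [hdp]
      exact_mod_cast Finset.card_le_univ _
    nlinarith [mul_le_mul_of_nonneg_right (show E - 1 ≤ E + 1 by linarith)
        (show (0:ℝ) ≤ (domk G 1 B : ℝ) - (p:ℝ) by linarith),
      mul_le_mul_of_nonneg_left (show (domk G 1 B : ℝ) - (p:ℝ)
        ≤ (domk G 1 (A p) : ℝ) - (p:ℝ) by linarith) (le_of_lt hE1pos)]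
  · -- no full coverage: every greedy step gains at least 1
    have hge1 : ∀ i < p, domk G 1 (A i) + 1 ≤ domk G 1 (A (i + 1)) := by
      intro i hi
      have hne : (A i).biUnion (kNbhd G 1) ≠ Finset.univ := by
        intro hU
        apply hfull
        apply Finset.eq_univ_of_forall
        intro x
        have hmono := Finset.biUnion_subset_biUnion_of_subset_left (kNbhd G 1)
          (hchain p le_rfl i (le_of_lt hi))
        exact hmono (hU ▸ Finset.mem_univ x)
      obtain ⟨u, hu⟩ : ∃ u, u ∉ (A i).biUnion (kNbhd G 1) := by
        by_contra hcon
        push_neg at hcon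
        exact hne (Finset.eq_univ_of_forall hcon)
      have huA : u ∉ A i := fun h => hu (subset_biUnion_kNbhd G 1 (A i) h)
      obtain ⟨v, hv, he, hmax⟩ := hgr i hi
      have h1 : domk G 1 (A i) + 1 ≤ domk G 1 (insert u (A i)) := by
        rw [domk_insert]
        have hne2 : (kNbhd G 1 u \ (A i).biUnion (kNbhd G 1)).Nonempty :=
          ⟨u, Finset.mem_sdiff.2 ⟨mem_kNbhd_self G 1 u, hu⟩⟩
        have := Finset.card_pos.2 hne2
        omega
      refine h1.trans ?_
      rw [he]
      exact hmax u huA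
    by_cases hg2 : ∀ i < p, domk G 1 (A i) + 2 ≤ domk G 1 (A (i + 1))
    · -- all gains at least 2: dom (A p) ≥ 2 p, use the e-bound
      have h2p : ∀ m ≤ p, 2 * m ≤ domk G 1 (A m) := by
        intro m
        induction m with
        | zero => intro _; simp
        | succ m ih =>
          intro hm
          have h1 := hg2 m (by omega)
          have h2 := ih (by omega)
          omega
      have h2p' : (2:ℝ) * (p:ℝ) ≤ (domk G 1 (A p) : ℝ) := by
        exact_mod_cast h2p p le_rfl
      -- (1 - 1/p)^p ≤ 1/e
      have hpow : (1 - 1 / (p:ℝ)) ^ p ≤ E⁻¹ := by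
        have h1 : (1 - 1 / (p:ℝ)) ≤ Real.exp (-(1 / (p:ℝ))) := by
          have := Real.add_one_le_exp (-(1 / (p:ℝ)))
          linarith
        have h2 : (1 - 1 / (p:ℝ)) ^ p ≤ Real.exp (-(1 / (p:ℝ))) ^ p :=
          pow_le_pow_left₀ h1p h1 p
        have h3 : Real.exp (-(1 / (p:ℝ))) ^ p = Real.exp (-1) := by
          rw [← Real.exp_nat_mul]
          congr 1
          field_simp
        rw [h3, Real.exp_neg] at h2
        exact h2
      have h6 : (domk G 1 B : ℝ) - (domk G 1 (A p) : ℝ) ≤ E⁻¹ * (domk G 1 B : ℝ) :=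
        (hrec p le_rfl).trans (mul_le_mul_of_nonneg_right hpow (by positivity))
      have h7 : E * ((domk G 1 B : ℝ) - (domk G 1 (A p) : ℝ)) ≤ (domk G 1 B : ℝ) := by
        calc E * ((domk G 1 B : ℝ) - (domk G 1 (A p) : ℝ))
            ≤ E * (E⁻¹ * (domk G 1 B : ℝ)) :=
              mul_le_mul_of_nonneg_left h6 (le_of_lt hEpos)
          _ = (domk G 1 B : ℝ) := by field_simp
      nlinarith [h7, h2p', hpB]
    · -- some gain ≤ 1: take the first such step j
      push_neg at hg2
      have hex : ∃ i, i < p ∧ domk G 1 (A (i + 1)) < domk G 1 (A i) + 2 := by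
        obtain ⟨i, hi, hlt⟩ := hg2
        exact ⟨i, hi, by omega⟩
      classical
      obtain ⟨j, hjp, hjgain, hjmin'⟩ : ∃ j, j < p ∧
          domk G 1 (A (j + 1)) < domk G 1 (A j) + 2 ∧
          ∀ i < j, ¬(i < p ∧ domk G 1 (A (i + 1)) < domk G 1 (A i) + 2) :=
        ⟨Nat.find hex, (Nat.find_spec hex).1, (Nat.find_spec hex).2,
          fun i h => Nat.find_min hex h⟩
      have hjmin : ∀ i < j, domk G 1 (A i) + 2 ≤ domk G 1 (A (i + 1)) := by
        intro i hij
        have h1 := hjmin' i hij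
        have hip : i < p := lt_trans hij hjp
        by_contra hcon
        exact h1 ⟨hip, by omega⟩
      have h2j : ∀ m ≤ j, 2 * m ≤ domk G 1 (A m) := by
        intro m
        induction m with
        | zero => intro _; simp
        | succ m ih =>
          intro hm
          have h1 := hjmin m (by omega)
          have h2 := ih (by omega)
          omega
      -- dom B ≤ dom (A j) + p
      have hBle : domk G 1 B ≤ domk G 1 (A j) + p := by
        obtain ⟨v, hv, he, hmax⟩ := hgr j hjp
        have h1 : ∀ b ∈ B, (kNbhd G 1 b \ (A j).biUnion (kNbhd G 1)).card ≤ 1 := by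
          intro b _
          by_cases hbA : b ∈ A j
          · have hsubN : kNbhd G 1 b ⊆ (A j).biUnion (kNbhd G 1) :=
              fun x hx => Finset.mem_biUnion.2 ⟨b, hbA, hx⟩
            rw [Finset.sdiff_eq_empty_iff_subset.2 hsubN]
            simp
          · have h2 := hmax b hbA
            rw [← he] at h2
            rw [domk_insert] at h2
            omega
        calc domk G 1 B ≤ domk G 1 (A j)
              + ∑ b ∈ B, (kNbhd G 1 b \ (A j).biUnion (kNbhd G 1)).card :=
              domk_le_cover G 1 (A j) B
          _ ≤ domk G 1 (A j) + ∑ _b ∈ B, 1 :=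
              Nat.add_le_add le_rfl (Finset.sum_le_sum h1)
          _ = domk G 1 (A j) + p := by rw [Finset.sum_const, smul_eq_mul, mul_one, hB]
      -- dom (A p) ≥ dom (A j) + (p - j)
      have hstepge : ∀ m, j + m ≤ p → domk G 1 (A j) + m ≤ domk G 1 (A (j + m)) := by
        intro m
        induction m with
        | zero => intro _; simp
        | succ m ih =>
          intro hm
          have h1 := hge1 (j + m) (by omega)
          have h2 := ih (by omega)
          have : j + (m + 1) = (j + m) + 1 := by omega
          rw [this]
          omega
      have hxa : (domk G 1 (A j) : ℝ) + ((p:ℝ) - (j:ℝ)) ≤ (domk G 1 (A p) : ℝ) := by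
        have h1 := hstepge (p - j) (by omega)
        have h2 : j + (p - j) = p := by omega
        rw [h2] at h1
        have h3 : (domk G 1 (A j) : ℝ) + ((p - j : ℕ) : ℝ) ≤ (domk G 1 (A p) : ℝ) := by
          exact_mod_cast h1
        rwa [Nat.cast_sub (le_of_lt hjp)] at h3
      have ha2j : 2 * (j:ℝ) ≤ (domk G 1 (A j) : ℝ) := by
        exact_mod_cast h2j j le_rfl
      have hyle : (domk G 1 B : ℝ) ≤ (domk G 1 (A j) : ℝ) + (p:ℝ) := by
        exact_mod_cast hBle
      have hj0 : (0:ℝ) ≤ (j:ℝ) := Nat.cast_nonneg j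
      have hh1 : (E - 1) * ((domk G 1 B : ℝ) - (p:ℝ)) ≤ (E - 1) * (domk G 1 (A j) : ℝ) :=
        mul_le_mul_of_nonneg_left (by linarith) (by linarith)
      have hh2 : ((domk G 1 (A j) : ℝ) - (j:ℝ)) * (E + 1)
          ≤ ((domk G 1 (A p) : ℝ) - (p:ℝ)) * (E + 1) :=
        mul_le_mul_of_nonneg_right (by linarith) (le_of_lt hE1pos)
      have hh3 : (j:ℝ) * (E + 1) ≤ (j:ℝ) * 4 :=
        mul_le_mul_of_nonneg_left (by linarith) hj0
      nlinarith [hh1, hh2, hh3, ha2j]
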